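/- Let S = k[x_1,x_2,x_3] and let d = (d_1,d_2,d_3) with 1 ≤ d_1 ≤ d_2 ≤ d_3, and 1 ≤ D ≤ d_1+d_2+d_3-3. Let a ∈ {1,2,3} be such that Σ_{i=1}^{a-1}(d_i-1) < D ≤ Σ_{i=1}^{a}(d_i-1), and define c = (c_1,c_2,c_3) by c_i = 1 for i < a, c_a = d_a - (D - Σ_{i=1}^{a-1}(d_i-1)), and c_i = d_i for i > a. Let U_D be the lexicographically largest monomial of degree D not in (x_1^{d_1},x_2^{d_2},x_3^{d_3}). Then the colon ideal (x_1^{d_1},x_2^{d_2},x_3^{d_3}) : U_D equals (x_1^{c_1},x_2^{c_2},x_3^{c_3}). -/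

import Mathlib

open MvPolynomial Finsupp

variable {k : Type} [Field k]

/-- Hilbert function of `S/I` in degree `m`, where `S = k[x_1,...,x_n]`. -/
noncomputable def HF {n : ℕ} (I : Ideal (MvPolynomial (Fin n) k)) (m : ℕ) : ℕ :=
  Module.finrank k
    ((homogeneousSubmodule (Fin n) k m).map (Ideal.Quotient.mkₐ k I).toLinearMap)

/-- The ideal `(x_1^{d_1},...,x_h^{d_h})` inside `k[x_1,...,x_n]`. -/
noncomputable def pows {n h : ℕ} (hh : h ≤ n) (d : Fin h → ℕ) :
    Ideal (MvPolynomial (Fin n) k) :=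
  Ideal.span (Set.range fun i : Fin h => (X (Fin.castLE hh i) : MvPolynomial (Fin n) k) ^ d i)

/-- `u` is the exponent vector of the lexicographically largest monomial of degree `D`
not belonging to the ideal `I` (convention `x_1 > x_2 > ... > x_n`). -/
def IsLexLargestNonmember {n : ℕ} (I : Ideal (MvPolynomial (Fin n) k)) (D : ℕ)
    (u : Fin n →₀ ℕ) : Prop :=
  (∑ i, u i) = D ∧ (monomial u (1 : k)) ∉ I ∧
    ∀ v : Fin n →₀ ℕ, (∑ i, v i) = D → (monomial v (1 : k)) ∉ I → toLex v ≤ toLex u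

/-- Hilbert–Samuel (cumulative Hilbert) function of `S/I`. -/
noncomputable def cumHF {n : ℕ} (I : Ideal (MvPolynomial (Fin n) k)) (m : ℕ) : ℤ :=
  ∑ j ∈ Finset.range (m + 1), (HF I j : ℤ)

/-- Forward difference operator. -/
def diffOp (f : ℕ → ℤ) : ℕ → ℤ := fun m => f (m + 1) - f m

/-- The multiplicity `e(S/I)`, where `t = dim S/I`: the eventual (constant) value of the
`t`-th finite difference of the Hilbert–Samuel function of `S/I`. -/
noncomputable def mult {n : ℕ} (I : Ideal (MvPolynomial (Fin n) k)) (t : ℕ) : ℤ :=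
  Filter.limsup (diffOp^[t] (cumHF I)) Filter.atTop

/-- The height of an ideal: the infimum of heights of primes containing it. -/
noncomputable def idealHeight {n : ℕ} (I : Ideal (MvPolynomial (Fin n) k)) : ℕ∞ :=
  ⨅ (P : PrimeSpectrum (MvPolynomial (Fin n) k)) (_ : I ≤ P.asIdeal), Order.height P

/-- A homogeneous ideal. -/
def IsHomogeneousIdeal {n : ℕ} (I : Ideal (MvPolynomial (Fin n) k)) : Prop :=
  ∀ f ∈ I, ∀ m : ℕ, homogeneousComponent m f ∈ I

/-- Hilbert function of the graded submodule `a/f` of `S/f` in degree `m`. -/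
noncomputable def HFsub {n : ℕ} (f a : Ideal (MvPolynomial (Fin n) k)) (m : ℕ) : ℕ :=
  Module.finrank k
    ((Submodule.map (Ideal.Quotient.mkₐ k f).toLinearMap (homogeneousSubmodule (Fin n) k m)) ⊓
      (Submodule.map (Ideal.Quotient.mkₐ k f).toLinearMap (Submodule.restrictScalars k a)) :
      Submodule k (MvPolynomial (Fin n) k ⧸ f))

lemma mem_pows_iff {d : Fin 3 → ℕ} {f : MvPolynomial (Fin 3) k} :
    f ∈ pows (k := k) le_rfl d ↔ ∀ m ∈ f.support, ∃ i, d i ≤ m i := by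
  have h1 : Set.range (fun i : Fin 3 => (X (Fin.castLE le_rfl i) : MvPolynomial (Fin 3) k) ^ d i)
      = (fun s => monomial s (1:k)) '' (Set.range fun i : Fin 3 => Finsupp.single i (d i)) := by
    have : (fun i : Fin 3 => (X (Fin.castLE le_rfl i) : MvPolynomial (Fin 3) k) ^ d i)
        = (fun s => monomial s (1:k)) ∘ (fun i : Fin 3 => Finsupp.single i (d i)) := by
      funext i
      simp [Function.comp, X_pow_eq_monomial]
    rw [this, Set.range_comp]
  rw [pows, h1, mem_ideal_span_monomial_image]
  constructor
  · intro h m hm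
    obtain ⟨si, ⟨i, rfl⟩, hle⟩ := h m hm
    exact ⟨i, by simpa using (Finsupp.single_le_iff.mp hle)⟩
  · intro h m hm
    obtain ⟨i, hi⟩ := h m hm
    exact ⟨Finsupp.single i (d i), ⟨i, rfl⟩, Finsupp.single_le_iff.mpr hi⟩

lemma monomial_not_mem_pows_iff {d : Fin 3 → ℕ} {v : Fin 3 →₀ ℕ} :
    (monomial v (1:k)) ∉ pows (k := k) le_rfl d ↔ ∀ i, v i < d i := by
  classical
  rw [mem_pows_iff, support_monomial, if_neg (one_ne_zero : (1:k) ≠ 0)]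
  simp only [Finset.mem_singleton, forall_eq]
  push_neg
  rfl

lemma mul_monomial_mem_pows_iff {d : Fin 3 → ℕ} {u : Fin 3 →₀ ℕ} {f : MvPolynomial (Fin 3) k} :
    f * monomial u 1 ∈ pows (k := k) le_rfl d ↔ ∀ m ∈ f.support, ∃ i, d i ≤ m i + u i := by
  rw [mem_pows_iff]
  constructor
  · intro h m hm
    have hmem : m + u ∈ (f * monomial u 1).support := by
      rw [MvPolynomial.mem_support_iff, coeff_mul_monomial', if_pos le_add_self,
        add_tsub_cancel_right, mul_one]
      exact MvPolynomial.mem_support_iff.mp hm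
    obtain ⟨i, hi⟩ := h (m + u) hmem
    exact ⟨i, by simpa using hi⟩
  · intro h m hm
    rw [MvPolynomial.mem_support_iff, coeff_mul_monomial'] at hm
    split_ifs at hm with hle
    · rw [mul_one] at hm
      obtain ⟨i, hi⟩ := h (m - u) (MvPolynomial.mem_support_iff.mpr hm)
      refine ⟨i, ?_⟩
      have := Finsupp.le_def.mp hle i
      rw [Finsupp.tsub_apply] at hi
      omega
    · exact absurd rfl hm

lemma lex_le_of (v w : Fin 3 →₀ ℕ)
    (h0 : w 0 < v 0 → False)
    (h1 : w 0 = v 0 → w 1 < v 1 → False)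
    (h2 : w 0 = v 0 → w 1 = v 1 → w 2 < v 2 → False) :
    toLex v ≤ toLex w := by
  rw [← not_lt]
  intro hlt
  rw [Finsupp.Lex.lt_iff] at hlt
  obtain ⟨i, hji, hi⟩ := hlt
  fin_cases i
  · exact h0 hi
  · exact h1 (hji 0 (by decide)) hi
  · exact h2 (hji 0 (by decide)) (hji 1 (by decide)) hi

lemma identify_u (d : Fin 3 → ℕ) (D : ℕ) (u w : Fin 3 →₀ ℕ)
    (hu : IsLexLargestNonmember (pows (k := k) le_rfl d) D u)
    (hwsum : w 0 + w 1 + w 2 = D) (hwd : ∀ i, w i < d i)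
    (hmax : ∀ v : Fin 3 →₀ ℕ, v 0 + v 1 + v 2 = D → (∀ i, v i < d i) →
      toLex v ≤ toLex w) : u = w := by
  obtain ⟨husum, humem, hmaxu⟩ := hu
  have h1 : toLex w ≤ toLex u :=
    hmaxu w (by rw [Fin.sum_univ_three]; exact hwsum) (monomial_not_mem_pows_iff.mpr hwd)
  have h2 : toLex u ≤ toLex w :=
    hmax u (by rw [← Fin.sum_univ_three]; exact husum) (monomial_not_mem_pows_iff.mp humem)
  exact toLex.injective (le_antisymm h2 h1)

lemma colon_eq (d c : Fin 3 → ℕ) (u : Fin 3 →₀ ℕ) (key : ∀ i, c i + u i = d i) :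
    (pows (k := k) le_rfl d).colon (Ideal.span {monomial u (1 : k)}) =
      pows (k := k) le_rfl c := by
  ext f
  rw [Ideal.mem_colon_span_singleton, mul_monomial_mem_pows_iff, mem_pows_iff]
  refine forall₂_congr fun m hm => ?_
  constructor
  · rintro ⟨i, hi⟩
    exact ⟨i, by have := key i; omega⟩
  · rintro ⟨i, hi⟩
    exact ⟨i, by have := key i; omega⟩

theorem stmt1 {k : Type} [Field k] (d : Fin 3 → ℕ) (hd1 : ∀ i, 1 ≤ d i)
    (hmono : Monotone d) (D : ℕ) (hD1 : 1 ≤ D) (hD : D ≤ ∑ i, (d i - 1))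
    (a : Fin 3)
    (ha1 : ∑ i ∈ Finset.Iio a, (d i - 1) < D)
    (ha2 : D ≤ ∑ i ∈ Finset.Iic a, (d i - 1))
    (c : Fin 3 → ℕ)
    (hc : ∀ i, c i = if i < a then 1
      else if i = a then d a - (D - ∑ j ∈ Finset.Iio a, (d j - 1)) else d i)
    (u : Fin 3 →₀ ℕ)
    (hu : IsLexLargestNonmember (pows (k := k) le_rfl d) D u) :
    (pows (k := k) le_rfl d).colon (Ideal.span {monomial u (1 : k)}) =
      pows (k := k) le_rfl c := by
  have hud : ∀ i, u i < d i := monomial_not_mem_pows_iff.mp hu.2.1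
  have hD0 := hd1 0
  have hD1' := hd1 1
  have hD2 := hd1 2
  obtain rfl | rfl | rfl : a = 0 ∨ a = 1 ∨ a = 2 := by fin_cases a <;> decide
  · -- a = 0
    rw [show Finset.Iio (0:Fin 3) = ∅ from by decide, Finset.sum_empty] at ha1
    rw [show Finset.Iic (0:Fin 3) = {0} from by decide, Finset.sum_singleton] at ha2
    have hc0 := hc 0
    have hc1 := hc 1
    have hc2 := hc 2
    rw [if_neg (by decide), if_pos (by decide),
      show Finset.Iio (0:Fin 3) = ∅ from by decide, Finset.sum_empty] at hc0
    rw [if_neg (by decide), if_neg (by decide)] at hc1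
    rw [if_neg (by decide), if_neg (by decide)] at hc2
    set w : Fin 3 →₀ ℕ := Finsupp.equivFunOnFinite.symm ![D, 0, 0] with hw
    have hw0 : w 0 = D := rfl
    have hw1 : w 1 = 0 := rfl
    have hw2 : w 2 = 0 := rfl
    have huw : u = w := by
      refine identify_u d D u w hu (by omega) ?_ ?_
      · intro i
        fin_cases i
        · show w 0 < d 0; omega
        · show w 1 < d 1; omega
        · show w 2 < d 2; omega
      · intro v hv hvd
        have h0 := hvd 0
        have h1 := hvd 1
        have h2 := hvd 2
        refine lex_le_of v w ?_ ?_ ?_ <;> intros <;> omega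
    have hu0 : u 0 = D := by rw [huw]; exact hw0
    have hu1 : u 1 = 0 := by rw [huw]; exact hw1
    have hu2 : u 2 = 0 := by rw [huw]; exact hw2
    refine colon_eq d c u ?_
    intro i
    fin_cases i
    · show c 0 + u 0 = d 0; omega
    · show c 1 + u 1 = d 1; omega
    · show c 2 + u 2 = d 2; omega
  · -- a = 1
    rw [show Finset.Iio (1:Fin 3) = {0} from by decide, Finset.sum_singleton] at ha1
    rw [show Finset.Iic (1:Fin 3) = {0,1} from by decide,
      Finset.sum_pair (by decide : (0:Fin 3) ≠ 1)] at ha2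
    have hc0 := hc 0
    have hc1 := hc 1
    have hc2 := hc 2
    rw [if_pos (by decide)] at hc0
    rw [if_neg (by decide), if_pos (by decide),
      show Finset.Iio (1:Fin 3) = {0} from by decide, Finset.sum_singleton] at hc1
    rw [if_neg (by decide), if_neg (by decide)] at hc2
    set w : Fin 3 →₀ ℕ := Finsupp.equivFunOnFinite.symm ![d 0 - 1, D - (d 0 - 1), 0] with hw
    have hw0 : w 0 = d 0 - 1 := rfl
    have hw1 : w 1 = D - (d 0 - 1) := rfl
    have hw2 : w 2 = 0 := rfl
    have huw : u = w := by
      refine identify_u d D u w hu (by omega) ?_ ?_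
      · intro i
        fin_cases i
        · show w 0 < d 0; omega
        · show w 1 < d 1; omega
        · show w 2 < d 2; omega
      · intro v hv hvd
        have h0 := hvd 0
        have h1 := hvd 1
        have h2 := hvd 2
        refine lex_le_of v w ?_ ?_ ?_ <;> intros <;> omega
    have hu0 : u 0 = d 0 - 1 := by rw [huw]; exact hw0
    have hu1 : u 1 = D - (d 0 - 1) := by rw [huw]; exact hw1
    have hu2 : u 2 = 0 := by rw [huw]; exact hw2
    refine colon_eq d c u ?_
    intro i
    fin_cases i
    · show c 0 + u 0 = d 0; omega
    · show c 1 + u 1 = d 1; omega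
    · show c 2 + u 2 = d 2; omega
  · -- a = 2
    rw [show Finset.Iio (2:Fin 3) = {0,1} from by decide,
      Finset.sum_pair (by decide : (0:Fin 3) ≠ 1)] at ha1
    rw [show Finset.Iic (2:Fin 3) = {0,1,2} from by decide,
      Finset.sum_insert (by decide), Finset.sum_pair (by decide : (1:Fin 3) ≠ 2)] at ha2
    have hc0 := hc 0
    have hc1 := hc 1
    have hc2 := hc 2
    rw [if_pos (by decide)] at hc0
    rw [if_pos (by decide)] at hc1
    rw [if_neg (by decide), if_pos (by decide),
      show Finset.Iio (2:Fin 3) = {0,1} from by decide,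
      Finset.sum_pair (by decide : (0:Fin 3) ≠ 1)] at hc2
    set w : Fin 3 →₀ ℕ :=
      Finsupp.equivFunOnFinite.symm ![d 0 - 1, d 1 - 1, D - ((d 0 - 1) + (d 1 - 1))] with hw
    have hw0 : w 0 = d 0 - 1 := rfl
    have hw1 : w 1 = d 1 - 1 := rfl
    have hw2 : w 2 = D - ((d 0 - 1) + (d 1 - 1)) := rfl
    have huw : u = w := by
      refine identify_u d D u w hu (by omega) ?_ ?_
      · intro i
        fin_cases i
        · show w 0 < d 0; omega
        · show w 1 < d 1; omega
        · show w 2 < d 2; omega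
      · intro v hv hvd
        have h0 := hvd 0
        have h1 := hvd 1
        have h2 := hvd 2
        refine lex_le_of v w ?_ ?_ ?_ <;> intros <;> omega
    have hu0 : u 0 = d 0 - 1 := by rw [huw]; exact hw0
    have hu1 : u 1 = d 1 - 1 := by rw [huw]; exact hw1
    have hu2 : u 2 = D - ((d 0 - 1) + (d 1 - 1)) := by rw [huw]; exact hw2
    refine colon_eq d c u ?_
    intro i
    fin_cases i
    · show c 0 + u 0 = d 0; omega
    · show c 1 + u 1 = d 1; omega
    · show c 2 + u 2 = d 2; omega
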